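/- Let f : ℝⁿ → ℝ be C¹ and strictly convex with unique global minimizer ȳ, and let φ : ℝⁿ → ℝ be C², strictly convex, Legendre type, with conjugate φ*. Let x : [0, ∞) → ℝⁿ solve ẋ(t) = −∇f(∇φ*(x(t))) with output y(t) := ∇φ*(x(t)) and y₀ := y(0). Then t ↦ D_φ(ȳ, y(t)) is nonincreasing; in particular D_φ(ȳ, y(t)) ≤ D_φ(ȳ, y₀) for all t ≥ 0. -/

import Mathlib

open scoped RealInnerProductSpace
open Filter MeasureTheory

/-- Legendre–Fenchel conjugate: `ψ*(v) = sup_x { ⟨v, x⟩ − ψ(x) }`. -/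
noncomputable def fenchel {n : ℕ} (ψ : EuclideanSpace ℝ (Fin n) → ℝ)
    (v : EuclideanSpace ℝ (Fin n)) : ℝ :=
  ⨆ z : EuclideanSpace ℝ (Fin n), (⟪v, z⟫ - ψ z)

/-- Bregman divergence: `D_ψ(y, y') = ψ(y) − ψ(y') − ⟨∇ψ(y'), y − y'⟩`. -/
noncomputable def bregman {n : ℕ} (ψ : EuclideanSpace ℝ (Fin n) → ℝ)
    (y y' : EuclideanSpace ℝ (Fin n)) : ℝ :=
  ψ y - ψ y' - ⟪gradient ψ y', y - y'⟫

/-- `φ` is of Legendre type: `|∇φ(x)| → ∞` as `|x| → ∞`. -/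
def LegendreType {n : ℕ} (φ : EuclideanSpace ℝ (Fin n) → ℝ) : Prop :=
  Tendsto (fun z => ‖gradient φ z‖) (cocompact (EuclideanSpace ℝ (Fin n))) atTop

section BregmanAux

open Topology

variable {n : ℕ}

local notation "E" => EuclideanSpace ℝ (Fin n)

private lemma lineMap_hasDerivAt' (z w : E) (s : ℝ) :
    HasDerivAt (fun s : ℝ => z + s • (w - z)) (w - z) s := by
  simpa using ((hasDerivAt_id s).smul_const (w - z)).const_add z

private lemma path_hasDerivAt {g : E → ℝ} (hd : Differentiable ℝ g) (z w : E) (s : ℝ) :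
    HasDerivAt (fun s : ℝ => g (z + s • (w - z)))
      ⟪gradient g (z + s • (w - z)), w - z⟫ s := by
  have h1 := ((hd (z + s • (w - z))).hasGradientAt).hasFDerivAt
  have h2 := h1.comp_hasDerivAt s (lineMap_hasDerivAt' z w s)
  simpa [InnerProductSpace.toDual_apply_apply, Function.comp_def] using h2

private lemma first_order {g : E → ℝ} (hg : ConvexOn ℝ Set.univ g)
    (hd : Differentiable ℝ g) (z w : E) :
    g z + ⟪gradient g z, w - z⟫ ≤ g w := by
  rcases eq_or_ne w z with rfl | hne
  · simp
  have hψ : ConvexOn ℝ Set.univ (fun s : ℝ => g (z + s • (w - z))) := by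
    have h := hg.comp_affineMap (AffineMap.lineMap z w)
    have heq : (g ∘ (AffineMap.lineMap z w)) = fun s : ℝ => g (z + s • (w - z)) := by
      funext s
      simp [AffineMap.lineMap_apply, add_comm]
    rw [heq] at h
    simpa using h
  have key := hψ.le_slope_of_hasDerivAt (Set.mem_univ (0:ℝ)) (Set.mem_univ (1:ℝ)) one_pos
    (path_hasDerivAt hd z w 0)
  rw [slope_def_field] at key
  simp only [zero_smul, add_zero, one_smul, add_sub_cancel, sub_zero, div_one] at key
  linarith [key]

private lemma grad_mono {g : E → ℝ} (hg : ConvexOn ℝ Set.univ g)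
    (hd : Differentiable ℝ g) (z w : E) :
    0 ≤ ⟪gradient g w - gradient g z, w - z⟫ := by
  have h1 := first_order hg hd z w
  have h2 := first_order hg hd w z
  have h3 : ⟪gradient g w, z - w⟫ = -⟪gradient g w, w - z⟫ := by
    rw [← inner_neg_right, neg_sub]
  rw [inner_sub_left]
  linarith

private lemma grad_injective {φ : E → ℝ} (hs : StrictConvexOn ℝ Set.univ φ)
    (hd : Differentiable ℝ φ) : Function.Injective (gradient φ) := by
  intro a b hab
  by_contra hne
  have hmid := hs.2 (Set.mem_univ a) (Set.mem_univ b) hne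
    (by norm_num : (0:ℝ) < 1/2) (by norm_num : (0:ℝ) < 1/2) (by norm_num)
  set m := (1/2 : ℝ) • a + (1/2 : ℝ) • b with hm
  have h1 := first_order hs.convexOn hd a m
  have h2 := first_order hs.convexOn hd b m
  rw [hab] at h1
  have hsum : ⟪gradient φ b, m - a⟫ + ⟪gradient φ b, m - b⟫ = 0 := by
    rw [← inner_add_right]
    have hz : (m - a) + (m - b) = 0 := by
      rw [hm]; module
    rw [hz, inner_zero_right]
  rw [smul_eq_mul, smul_eq_mul] at hmid
  linarith

private lemma min_ball_inner {g : E → ℝ} (hd : Differentiable ℝ g) {r : ℝ} {z : E}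
    (hz : z ∈ Metric.closedBall (0:E) r) (hzmin : IsMinOn g (Metric.closedBall (0:E) r) z)
    {w : E} (hw : w ∈ Metric.closedBall (0:E) r) :
    0 ≤ ⟪gradient g z, w - z⟫ := by
  have hder : HasDerivAt (fun s : ℝ => g (z + s • (w - z))) ⟪gradient g z, w - z⟫ 0 := by
    have := path_hasDerivAt hd z w 0
    simpa using this
  have htend : Tendsto (slope (fun s : ℝ => g (z + s • (w - z))) 0) (𝓝[>] (0:ℝ))
      (𝓝 ⟪gradient g z, w - z⟫) :=
    (hasDerivAt_iff_tendsto_slope.mp hder).mono_left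
      (nhdsWithin_mono 0 (fun s hs => ne_of_gt hs))
  refine ge_of_tendsto htend ?_
  have h1 : ∀ᶠ s : ℝ in 𝓝[>] 0, s < 1 :=
    eventually_nhdsWithin_of_eventually_nhds (eventually_lt_nhds one_pos)
  filter_upwards [h1, self_mem_nhdsWithin] with s hs1 hs0
  have hs0' : (0:ℝ) < s := hs0
  have hmem : z + s • (w - z) ∈ Metric.closedBall (0:E) r := by
    have hc := (convex_closedBall (0:E) r) hz hw (by linarith : (0:ℝ) ≤ 1 - s)
      hs0'.le (by ring)
    have : (1 - s) • z + s • w = z + s • (w - z) := by module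
    rwa [this] at hc
  have hge := hzmin hmem
  rw [slope_def_field]
  simp only [sub_zero, zero_smul, add_zero]
  have : g z ≤ g (z + s • (w - z)) := hge
  exact div_nonneg (by linarith) hs0'.le

private lemma inner_right_hasFDerivAt (v z : E) :
    HasFDerivAt (fun w : E => ⟪v, w⟫) (InnerProductSpace.toDual ℝ (EuclideanSpace ℝ (Fin n)) v) z := by
  have h := (InnerProductSpace.toDual ℝ (EuclideanSpace ℝ (Fin n)) v).hasFDerivAt (x := z)
  convert h using 2
  exact (InnerProductSpace.toDual_apply_apply ..).symm

private lemma sub_linear_hasGradientAt {φ : E → ℝ} (hd : Differentiable ℝ φ) (v z : E) :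
    HasGradientAt (fun w : E => φ w - ⟪v, w⟫) (gradient φ z - v) z := by
  have h1 := ((hd z).hasGradientAt).hasFDerivAt
  have h2 := h1.sub (inner_right_hasFDerivAt v z)
  have h3 := h2.hasGradientAt
  rw [← map_sub, LinearIsometryEquiv.symm_apply_apply] at h3
  exact h3

private lemma grad_surjective {φ : E → ℝ} (hconv : ConvexOn ℝ Set.univ φ)
    (hd : Differentiable ℝ φ)
    (hleg : Tendsto (fun z : E => ‖gradient φ z‖) (cocompact (EuclideanSpace ℝ (Fin n))) atTop) :
    Function.Surjective (gradient φ) := by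
  intro v
  set g : E → ℝ := fun w => φ w - ⟪v, w⟫ with hgdef
  have hgrad : ∀ z : E, gradient g z = gradient φ z - v :=
    fun z => (sub_linear_hasGradientAt hd v z).gradient
  have hgd : Differentiable ℝ g := fun z => (sub_linear_hasGradientAt hd v z).differentiableAt
  have hgconv : ConvexOn ℝ Set.univ g := by
    refine hconv.sub ⟨convex_univ, fun x _ y _ a b _ _ _ => le_of_eq ?_⟩
    simp [inner_add_right, inner_smul_right]
  suffices hz : ∃ z : E, gradient φ z - v = 0 by
    obtain ⟨z, hz⟩ := hz
    exact ⟨z, by rwa [sub_eq_zero] at hz⟩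
  by_contra hno
  push_neg at hno
  have key : ∀ r : ℝ, 0 < r → ∃ z : E, ‖z‖ = r ∧
      ⟪gradient φ z - v, z⟫ = -(r * ‖gradient φ z - v‖) := by
    intro r hr
    obtain ⟨z, hzm, hzmin⟩ := (isCompact_closedBall (0:E) r).exists_isMinOn
      (Metric.nonempty_closedBall.2 hr.le) hgd.continuous.continuousOn
    set u : E := gradient φ z - v with hu
    have hune : u ≠ 0 := hno z
    have hnz : (0:ℝ) < ‖u‖ := norm_pos_iff.2 hune
    have hb : ‖z‖ = r := by
      by_contra hne
      have h1 : ‖z‖ < r := lt_of_le_of_ne (by simpa using hzm) hne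
      have hloc : IsLocalMin g z :=
        hzmin.isLocalMin (Filter.mem_of_superset
          (Metric.isOpen_ball.mem_nhds (by simpa using h1)) Metric.ball_subset_closedBall)
      have h2 : gradient g z = 0 := by
        have h3 := hloc.hasFDerivAt_eq_zero ((hgd z).hasGradientAt).hasFDerivAt
        have := congrArg (InnerProductSpace.toDual ℝ (EuclideanSpace ℝ (Fin n))).symm h3
        simpa [gradient] using this
      rw [hgrad z] at h2
      exact hune h2
    refine ⟨z, hb, ?_⟩
    set w : E := (-(r / ‖u‖)) • u with hw
    have hwmem : w ∈ Metric.closedBall (0:E) r := by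
      simp only [Metric.mem_closedBall, dist_zero_right, hw, norm_smul]
      rw [norm_neg, Real.norm_eq_abs, abs_of_nonneg (by positivity)]
      field_simp
      exact le_rfl
    have hvar := min_ball_inner hgd hzm hzmin hwmem
    rw [hgrad z, inner_sub_right] at hvar
    have hiw : ⟪gradient φ z - v, w⟫ = -(r * ‖u‖) := by
      rw [hw, real_inner_smul_right, real_inner_self_eq_norm_sq]
      field_simp
      ring
    have hcs : -⟪gradient φ z - v, z⟫ ≤ r * ‖u‖ := by
      have := real_inner_le_norm (-(gradient φ z - v)) z
      rw [inner_neg_left, norm_neg] at this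
      calc -⟪gradient φ z - v, z⟫ ≤ ‖u‖ * ‖z‖ := this
        _ = r * ‖u‖ := by rw [hb]; ring
    have : ⟪gradient φ z - v, z⟫ ≤ -(r * ‖u‖) := by
      rw [hiw] at hvar; linarith
    linarith [this, hcs]
  have hlegg : Tendsto (fun z : E => ‖gradient φ z - v‖) (cocompact (EuclideanSpace ℝ (Fin n))) atTop := by
    refine tendsto_atTop_mono (fun z => ?_) (tendsto_atTop_add_const_right _ (-‖v‖) hleg)
    have := norm_sub_norm_le (gradient φ z) v
    linarith
  obtain ⟨z1, hz1, hip1⟩ := key 1 one_pos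
  set c := ‖gradient φ z1 - v‖ with hc
  have hev : ∀ᶠ z : E in cocompact (EuclideanSpace ℝ (Fin n)), c < ‖gradient φ z - v‖ :=
    hlegg.eventually (eventually_gt_atTop c)
  obtain ⟨K, hK, hKsub⟩ := hasBasis_cocompact.eventually_iff.mp hev
  obtain ⟨R, hR⟩ := hK.isBounded.subset_closedBall (0:E)
  set r' : ℝ := max (R + 1) 2 with hr'
  have hr'2 : (2:ℝ) ≤ r' := le_max_right _ _
  have hr'R : R < r' := by
    have := le_max_left (R+1) 2
    linarith
  obtain ⟨z2, hz2, hip2⟩ := key r' (by linarith)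
  have hz2K : z2 ∉ K := by
    intro hmem
    have := hR hmem
    simp only [Metric.mem_closedBall, dist_zero_right] at this
    rw [hz2] at this
    linarith
  have hgt : c < ‖gradient φ z2 - v‖ := hKsub hz2K
  have hmono := grad_mono hgconv hgd z1 z2
  rw [hgrad z1, hgrad z2] at hmono
  set u1 : E := gradient φ z1 - v
  set u2 : E := gradient φ z2 - v
  have hcs1 : -⟪u2, z1⟫ ≤ ‖u2‖ * 1 := by
    have := real_inner_le_norm (-u2) z1
    rw [inner_neg_left, norm_neg, hz1] at this
    linarith
  have hcs2 : -⟪u1, z2⟫ ≤ ‖u1‖ * r' := by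
    have := real_inner_le_norm (-u1) z2
    rw [inner_neg_left, norm_neg, hz2] at this
    linarith
  rw [inner_sub_left, inner_sub_right, inner_sub_right] at hmono
  rw [hip1, hip2] at hmono
  have hfin : ‖u2‖ ≤ ‖u1‖ := by nlinarith [hmono, hcs1, hcs2, hr'2]
  rw [← hc] at hfin
  linarith

private lemma gradient_continuous' {φ : E → ℝ} (hφ : ContDiff ℝ 2 φ) :
    Continuous (gradient φ) := by
  have h1 : Continuous (fderiv ℝ φ) := hφ.continuous_fderiv (by norm_num)
  exact (InnerProductSpace.toDual ℝ (EuclideanSpace ℝ (Fin n))).symm.continuous.comp h1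

private lemma inv_continuous {φ : E → ℝ} (hcont : Continuous (gradient φ))
    (hleg : Tendsto (fun z : E => ‖gradient φ z‖) (cocompact (EuclideanSpace ℝ (Fin n))) atTop)
    (hbij : Function.Bijective (gradient φ)) :
    Continuous (Function.invFun (gradient φ)) := by
  have hproper : IsProperMap (gradient φ) := by
    rw [isProperMap_iff_tendsto_cocompact]
    refine ⟨hcont, ?_⟩
    exact (tendsto_norm_atTop_iff_cobounded.mp hleg).mono_right Metric.cobounded_eq_cocompact.le
  have hclosed : IsClosedMap (gradient φ) := hproper.isClosedMap
  rw [continuous_iff_isClosed]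
  intro C hC
  have heq : Function.invFun (gradient φ) ⁻¹' C = gradient φ '' C := by
    ext w
    constructor
    · intro hw
      exact ⟨Function.invFun (gradient φ) w, hw, Function.invFun_eq (hbij.2 w)⟩
    · rintro ⟨z, hz, rfl⟩
      have : Function.invFun (gradient φ) (gradient φ z) = z :=
        Function.leftInverse_invFun hbij.1 z
      simpa [Set.mem_preimage, this] using hz
  rw [heq]
  exact hclosed C hC

private lemma fenchel_eq' {φ : E → ℝ} (hconv : ConvexOn ℝ Set.univ φ) (hd : Differentiable ℝ φ)
    {v z : E} (hz : gradient φ z = v) :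
    fenchel φ v = ⟪v, z⟫ - φ z := by
  have hub : ∀ w : E, ⟪v, w⟫ - φ w ≤ ⟪v, z⟫ - φ z := by
    intro w
    have h := first_order hconv hd z w
    rw [hz, inner_sub_right] at h
    linarith
  refine le_antisymm (ciSup_le hub) ?_
  exact le_ciSup ⟨⟪v, z⟫ - φ z, by rintro yy ⟨w, rfl⟩; exact hub w⟩ z

private lemma fenchel_hasGradientAt {φ : E → ℝ} (hconv : ConvexOn ℝ Set.univ φ)
    (hd : Differentiable ℝ φ) (Z : E → E) (hZ : ∀ v, gradient φ (Z v) = v)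
    (hZcont : Continuous Z) (v : E) : HasGradientAt (fenchel φ) (Z v) v := by
  have hval : ∀ w : E, fenchel φ w = ⟪w, Z w⟫ - φ (Z w) := fun w => fenchel_eq' hconv hd (hZ w)
  have hub : ∀ w u : E, ⟪w, u⟫ - φ u ≤ fenchel φ w := by
    intro w u
    rw [hval w]
    have h := first_order hconv hd (Z w) u
    rw [hZ w, inner_sub_right] at h
    linarith
  rw [hasGradientAt_iff_isLittleO, Asymptotics.isLittleO_iff]
  intro c hc
  have htend : Tendsto (fun w => ‖Z w - Z v‖) (𝓝 v) (𝓝 0) := by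
    have h := ((hZcont.tendsto v).sub_const (Z v)).norm
    simpa using h
  have hev : ∀ᶠ w in 𝓝 v, ‖Z w - Z v‖ < c := htend.eventually_lt_const hc
  filter_upwards [hev] with w hw
  have h1 : 0 ≤ fenchel φ w - fenchel φ v - ⟪Z v, w - v⟫ := by
    have hlb := hub w (Z v)
    rw [hval v] at *
    have : ⟪w, Z v⟫ - ⟪v, Z v⟫ - ⟪Z v, w - v⟫ = 0 := by
      rw [inner_sub_right, real_inner_comm (Z v) w, real_inner_comm (Z v) v]
      ring
    linarith
  have h2 : fenchel φ w - fenchel φ v - ⟪Z v, w - v⟫ ≤ ⟪w - v, Z w - Z v⟫ := by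
    have hlb := hub v (Z w)
    rw [hval w] at *
    have : ⟪w, Z w⟫ - ⟪v, Z w⟫ - ⟪Z v, w - v⟫ = ⟪w - v, Z w - Z v⟫ := by
      rw [inner_sub_right, inner_sub_left, inner_sub_right, inner_sub_right,
        real_inner_comm (Z v) w, real_inner_comm (Z v) v, real_inner_comm w (Z v)]
      ring
    linarith
  have h3 : ⟪w - v, Z w - Z v⟫ ≤ ‖w - v‖ * ‖Z w - Z v‖ := real_inner_le_norm _ _
  rw [Real.norm_eq_abs, abs_of_nonneg h1]
  have h4 : ‖w - v‖ * ‖Z w - Z v‖ ≤ c * ‖w - v‖ := by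
    rw [mul_comm]
    exact mul_le_mul_of_nonneg_right hw.le (norm_nonneg _)
  calc fenchel φ w - fenchel φ v - ⟪Z v, w - v⟫ ≤ ⟪w - v, Z w - Z v⟫ := h2
    _ ≤ ‖w - v‖ * ‖Z w - Z v‖ := h3
    _ ≤ c * ‖w - v‖ := h4

end BregmanAux

/-- along the mirror-descent closed loop, `t ↦ D_φ(ȳ, y(t))` is
nonincreasing on `[0, ∞)`; in particular `D_φ(ȳ, y(t)) ≤ D_φ(ȳ, y₀)`. -/
theorem bregman_to_minimizer_nonincreasing {n : ℕ} (f φ : EuclideanSpace ℝ (Fin n) → ℝ)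
    (hf : ContDiff ℝ 1 f) (hfconv : StrictConvexOn ℝ Set.univ f)
    (ybar : EuclideanSpace ℝ (Fin n)) (hmin : ∀ z, f ybar ≤ f z)
    (hφ : ContDiff ℝ 2 φ) (hφconv : StrictConvexOn ℝ Set.univ φ)
    (hleg : LegendreType φ)
    (x y : ℝ → EuclideanSpace ℝ (Fin n))
    (hode : ∀ t : ℝ, 0 ≤ t →
      HasDerivAt x (-gradient f (gradient (fenchel φ) (x t))) t)
    (hy : y = fun t => gradient (fenchel φ) (x t)) :
    AntitoneOn (fun t => bregman φ ybar (y t)) (Set.Ici (0:ℝ)) ∧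
    ∀ t : ℝ, 0 ≤ t → bregman φ ybar (y t) ≤ bregman φ ybar (y 0) := by
  classical
  have hφd : Differentiable ℝ φ := hφ.differentiable (by norm_num)
  have hfd : Differentiable ℝ f := hf.differentiable (by norm_num)
  have hφcont := gradient_continuous' hφ
  have hbij : Function.Bijective (gradient φ) :=
    ⟨grad_injective hφconv hφd, grad_surjective hφconv.convexOn hφd hleg⟩
  set Z := Function.invFun (gradient φ) with hZdef
  have hZ : ∀ v, gradient φ (Z v) = v := fun v => Function.invFun_eq (hbij.2 v)
  have hZcont : Continuous Z := inv_continuous hφcont hleg hbij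
  have hgradF : ∀ v, HasGradientAt (fenchel φ) (Z v) v :=
    fenchel_hasGradientAt hφconv.convexOn hφd Z hZ hZcont
  have hgradF' : ∀ v, gradient (fenchel φ) v = Z v := fun v => (hgradF v).gradient
  have hyZ : ∀ t, y t = Z (x t) := by
    intro t; rw [hy]; exact hgradF' (x t)
  set V : ℝ → ℝ := fun t => φ ybar + fenchel φ (x t) - ⟪x t, ybar⟫ with hVdef
  have hVeq : (fun t => bregman φ ybar (y t)) = V := by
    funext t
    have h7 := fenchel_eq' hφconv.convexOn hφd (hZ (x t))
    rw [hyZ t]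
    unfold bregman
    rw [hZ (x t), hVdef]
    simp only
    rw [h7, inner_sub_right]
    ring
  -- derivative of V
  have hVder : ∀ t : ℝ, 0 ≤ t → HasDerivAt V
      ⟪Z (x t) - ybar, -gradient f (gradient (fenchel φ) (x t))⟫ t := by
    intro t ht
    have hG : HasFDerivAt (fun v => φ ybar + fenchel φ v - ⟪v, ybar⟫)
        (InnerProductSpace.toDual ℝ (EuclideanSpace ℝ (Fin n)) (Z (x t) - ybar)) (x t) := by
      have h1 := (hgradF (x t)).hasFDerivAt
      have h2 : HasFDerivAt (fun v : EuclideanSpace ℝ (Fin n) => ⟪v, ybar⟫)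
          (InnerProductSpace.toDual ℝ (EuclideanSpace ℝ (Fin n)) ybar) (x t) := by
        have h3 := inner_right_hasFDerivAt (n := n) ybar (x t)
        have : (fun w : EuclideanSpace ℝ (Fin n) => ⟪ybar, w⟫)
            = fun w : EuclideanSpace ℝ (Fin n) => ⟪w, ybar⟫ := by
          funext w; exact real_inner_comm _ _
        rwa [this] at h3
      have h4 := (h1.const_add (φ ybar)).sub h2
      rw [map_sub]
      exact h4
    have h5 := hG.comp_hasDerivAt t (hode t ht)
    exact h5
  have hnonpos : ∀ t : ℝ, 0 ≤ t →
      ⟪Z (x t) - ybar, -gradient f (gradient (fenchel φ) (x t))⟫ ≤ 0 := by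
    intro t ht
    have h6 := first_order hfconv.convexOn hfd (y t) ybar
    have h8 : f ybar ≤ f (y t) := hmin (y t)
    have h9 : ⟪gradient f (y t), ybar - y t⟫ ≤ 0 := by linarith
    rw [hgradF' (x t), ← hyZ t, inner_neg_right, real_inner_comm]
    have h10 : ⟪gradient f (y t), y t - ybar⟫ = -⟪gradient f (y t), ybar - y t⟫ := by
      rw [← inner_neg_right, neg_sub]
    rw [show y t - ybar = -(ybar - y t) by rw [neg_sub]] at *
    rw [inner_neg_right]
    linarith
  have hA : AntitoneOn V (Set.Ici (0:ℝ)) := by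
    apply antitoneOn_of_deriv_nonpos (convex_Ici 0)
    · exact fun t ht => ((hVder t ht).continuousAt).continuousWithinAt
    · intro t ht
      rw [interior_Ici] at ht
      exact ((hVder t (le_of_lt ht)).differentiableAt).differentiableWithinAt
    · intro t ht
      rw [interior_Ici] at ht
      rw [(hVder t ht.le).deriv]
      exact hnonpos t ht.le
  constructor
  · rw [hVeq]; exact hA
  · intro t ht
    have h11 := hA Set.self_mem_Ici ht ht
    have h12 := congrFun hVeq t
    have h13 := congrFun hVeq 0
    rw [h12, h13]
    exact h11
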